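/- arXiv:0810.1176 — 4 statements merged into one kernel-verified Lean document; each statement's English description precedes it below -/
import Mathlib

section
/- An element a = (a₁,a₂,a₃,a₄) ∈ Q satisfies a² = (0,0,0,0) if and only if a₁ = 0 and a₂ = 0. Consequently, every involution of Q lies in the subgroup Q³ = {(0,0,a₃,a₄) : a₃, a₄ ∈ F}, and every nonidentity element of Q³ is an involution. -/
noncomputable section

/-- `F` is the field `GF(8)` with 8 elements (characteristic 2). -/
abbrev F : Type := GaloisField 2 3

/-- The trace map `Tr : F → F`, `Tr α = α + α² + α⁴`. -/
def Tr (α : F) : F := α + α ^ 2 + α ^ 4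

theorem Tr_zero : Tr 0 = 0 := by simp [Tr]

theorem F.pow8 (x : F) : x ^ 8 = x := by
  haveI : Fintype F := Fintype.ofFinite F
  have h := FiniteField.pow_card x
  rwa [← Nat.card_eq_fintype_card, GaloisField.card 2 3 (by norm_num)] at h

theorem F.add_sq (x y : F) : (x + y) ^ 2 = x ^ 2 + y ^ 2 := CharTwo.add_sq x y

theorem F.add_pow4 (x y : F) : (x + y) ^ 4 = x ^ 4 + y ^ 4 := by
  rw [show (4 : ℕ) = 2 * 2 from rfl, pow_mul, pow_mul, pow_mul, F.add_sq, F.add_sq]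

theorem F.two (x : F) : x + x = 0 := CharTwo.add_self_eq_zero x

/-- The group `Q = 1 + J` of the paper, coded as quadruples of coefficients. -/
structure Q : Type where
  a1 : F
  a2 : F
  a3 : F
  a4 : F

namespace Q

instance : Mul Q :=
  ⟨fun a b =>
    ⟨a.a1 + b.a1, a.a2 + b.a2 + a.a1 * b.a1 ^ 2,
      a.a3 + b.a3 + a.a1 * b.a2 ^ 2 + a.a2 * b.a1 ^ 4,
      a.a4 + b.a4 + a.a1 * b.a3 ^ 2 + a.a2 * b.a2 ^ 4 + a.a3 * b.a1⟩⟩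

theorem mul_def (a b : Q) :
    a * b =
      ⟨a.a1 + b.a1, a.a2 + b.a2 + a.a1 * b.a1 ^ 2,
        a.a3 + b.a3 + a.a1 * b.a2 ^ 2 + a.a2 * b.a1 ^ 4,
        a.a4 + b.a4 + a.a1 * b.a3 ^ 2 + a.a2 * b.a2 ^ 4 + a.a3 * b.a1⟩ :=
  rfl

instance : One Q := ⟨⟨0, 0, 0, 0⟩⟩

theorem one_def : (1 : Q) = ⟨0, 0, 0, 0⟩ := rfl

instance : Inv Q :=
  ⟨fun a =>
    ⟨a.a1, a.a2 + a.a1 ^ 3,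
      a.a3 + a.a1 * (a.a2 + a.a1 ^ 3) ^ 2 + a.a2 * a.a1 ^ 4,
      a.a4 + a.a1 * (a.a3 + a.a1 * (a.a2 + a.a1 ^ 3) ^ 2 + a.a2 * a.a1 ^ 4) ^ 2 +
        a.a2 * (a.a2 + a.a1 ^ 3) ^ 4 + a.a3 * a.a1⟩⟩

theorem inv_def (a : Q) :
    a⁻¹ =
      ⟨a.a1, a.a2 + a.a1 ^ 3,
        a.a3 + a.a1 * (a.a2 + a.a1 ^ 3) ^ 2 + a.a2 * a.a1 ^ 4,
        a.a4 + a.a1 * (a.a3 + a.a1 * (a.a2 + a.a1 ^ 3) ^ 2 + a.a2 * a.a1 ^ 4) ^ 2 +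
          a.a2 * (a.a2 + a.a1 ^ 3) ^ 4 + a.a3 * a.a1⟩ :=
  rfl

theorem pr8 (x : F) : x ^ 8 = x := F.pow8 x
theorem pr9 (x : F) : x ^ 9 = x ^ 2 := by rw [show (9:ℕ) = 1+8 from rfl, pow_add, F.pow8]; ring
theorem pr10 (x : F) : x ^ 10 = x ^ 3 := by rw [show (10:ℕ) = 2+8 from rfl, pow_add, F.pow8]; ring
theorem pr11 (x : F) : x ^ 11 = x ^ 4 := by rw [show (11:ℕ) = 3+8 from rfl, pow_add, F.pow8]; ring
theorem pr12 (x : F) : x ^ 12 = x ^ 5 := by rw [show (12:ℕ) = 4+8 from rfl, pow_add, F.pow8]; ring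
theorem pr13 (x : F) : x ^ 13 = x ^ 6 := by rw [show (13:ℕ) = 5+8 from rfl, pow_add, F.pow8]; ring
theorem pr14 (x : F) : x ^ 14 = x ^ 7 := by rw [show (14:ℕ) = 6+8 from rfl, pow_add, F.pow8]; ring
theorem pr15 (x : F) : x ^ 15 = x := by rw [show (15:ℕ) = 7+8 from rfl, pow_add, F.pow8, ← pow_succ, F.pow8]
theorem pr16 (x : F) : x ^ 16 = x ^ 2 := by rw [show (16:ℕ) = 8+8 from rfl, pow_add, F.pow8]; ring
theorem pr17 (x : F) : x ^ 17 = x ^ 3 := by rw [show (17:ℕ) = 9+8 from rfl, pow_add, F.pow8, pr9]; ring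
theorem pr18 (x : F) : x ^ 18 = x ^ 4 := by rw [show (18:ℕ) = 10+8 from rfl, pow_add, F.pow8, pr10]; ring
theorem pr19 (x : F) : x ^ 19 = x ^ 5 := by rw [show (19:ℕ) = 11+8 from rfl, pow_add, F.pow8, pr11]; ring
theorem pr20 (x : F) : x ^ 20 = x ^ 6 := by rw [show (20:ℕ) = 12+8 from rfl, pow_add, F.pow8, pr12]; ring

theorem mul_assoc' (a b c : Q) : a * b * c = a * (b * c) := by
  obtain ⟨a1, a2, a3, a4⟩ := a
  obtain ⟨b1, b2, b3, b4⟩ := b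
  obtain ⟨c1, c2, c3, c4⟩ := c
  simp only [mul_def, mk.injEq]
  refine ⟨by ring, ?_, ?_, ?_⟩ <;>
  · simp only [F.add_sq, F.add_pow4, mul_pow]
    ring_nf
    try simp only [pr8, pr9, pr10, pr11, pr12, pr13, pr14, pr15, pr16, pr17, pr18, pr19, pr20]
    try ring_nf

theorem one_mul' (a : Q) : 1 * a = a := by
  obtain ⟨a1, a2, a3, a4⟩ := a
  simp only [one_def, mul_def, mk.injEq]
  refine ⟨by ring, by ring, by ring, by ring⟩


theorem mul_one' (a : Q) : a * 1 = a := by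
  obtain ⟨a1, a2, a3, a4⟩ := a
  simp only [one_def, mul_def, mk.injEq]
  refine ⟨by ring, by ring, by ring, by ring⟩

theorem inv_mul_cancel' (a : Q) : a⁻¹ * a = 1 := by
  obtain ⟨a1, a2, a3, a4⟩ := a
  show Q.mk _ _ _ _ * _ = _
  simp only [one_def, mul_def, mk.injEq]
  refine ⟨?_, ?_, ?_, ?_⟩ <;>
  · try simp only [F.add_sq, F.add_pow4, mul_pow]
    try ring_nf
    try simp only [pr8, pr9, pr10, pr11, pr12, pr13, pr14, pr15, pr16, pr17, pr18, pr19, pr20]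
    try ring_nf
    try simp [CharTwo.two_eq_zero]
    try ring_nf
    try simp [CharTwo.two_eq_zero]

instance : Group Q where
  mul_assoc := mul_assoc'
  one_mul := one_mul'
  mul_one := mul_one'
  inv_mul_cancel := inv_mul_cancel'

end Q

namespace Q

/-- The subgroup `Q³ = {(0,0,a₃,a₄) : a₃, a₄ ∈ F}` of `Q`. -/
def Q3 : Subgroup Q where
  carrier := {a : Q | a.a1 = 0 ∧ a.a2 = 0}
  one_mem' := ⟨rfl, rfl⟩
  mul_mem' := by
    rintro a b ⟨ha1, ha2⟩ ⟨hb1, hb2⟩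
    exact ⟨by simp [mul_def, ha1, hb1], by simp [mul_def, ha1, ha2, hb1, hb2]⟩
  inv_mem' := by
    rintro a ⟨ha1, ha2⟩
    exact ⟨by simp [inv_def, ha1], by simp [inv_def, ha1, ha2]⟩

/-- `a² = 1` in `Q` iff `a₁ = 0` and `a₂ = 0`; hence every involution of `Q` lies in
`Q³ = {(0,0,a₃,a₄)}`, and every nonidentity element of `Q³` is an involution. -/
theorem involutions_of_Q :
    (∀ a : Q, a * a = 1 ↔ a.a1 = 0 ∧ a.a2 = 0) ∧
      (∀ a : Q, a * a = 1 → a ≠ 1 → a ∈ Q3) ∧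
      (∀ a : Q, a ∈ Q3 → a ≠ 1 → a * a = 1) := by
  have key : ∀ a : Q, a * a = 1 ↔ a.a1 = 0 ∧ a.a2 = 0 := by
    intro a
    obtain ⟨a1, a2, a3, a4⟩ := a
    simp only [mul_def, one_def, mk.injEq, F.two, zero_add]
    constructor
    · rintro ⟨-, h2, -, h4⟩
      have h1 : a1 = 0 := by
        have : a1 ^ 3 = 0 := by linear_combination h2
        exact pow_eq_zero_iff (by norm_num) |>.mp this
      subst h1
      have : a2 ^ 5 = 0 := by linear_combination h4
      exact ⟨rfl, pow_eq_zero_iff (by norm_num) |>.mp this⟩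
    · rintro ⟨h1, h2⟩
      subst h1; subst h2
      refine ⟨?_, ?_, ?_, ?_⟩ <;> first | trivial | ring
  refine ⟨key, fun a h _ => (key a).mp h, fun a h hne => ?_⟩
  rw [key]
  exact h

end Q
end
end

section
/- Let b = (0,0,b₃,b₄) ∈ Q with Tr(b₃) = 0 and b₃ ≠ 0. Then the centralizer of b in Q is exactly the subgroup Q² = {(0,a₂,a₃,a₄) : a₂,a₃,a₄ ∈ F}; in particular this centralizer has index 8 in Q, so the conjugacy class of b in Q has size 8. -/
noncomputable section

namespace Q

theorem Tr_one_ne : Tr (1 : F) ≠ 0 := by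
  simp only [Tr, one_pow]
  rw [F.two 1, zero_add]
  exact one_ne_zero

theorem key (b3 b4 : F) (htr : Tr b3 = 0) (hb3 : b3 ≠ 0) (a : Q) :
    (⟨0, 0, b3, b4⟩ : Q) * a = a * ⟨0, 0, b3, b4⟩ ↔ a.a1 = 0 := by
  have hb1 : b3 ≠ 1 := fun h => Tr_one_ne (h ▸ htr)
  obtain ⟨a1, a2, a3, a4⟩ := a
  simp only [mul_def, mk.injEq]
  constructor
  · rintro ⟨-, -, -, h4⟩
    have h : a1 * (b3 ^ 2 - b3) = 0 := by linear_combination -h4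
    rcases mul_eq_zero.mp h with h | h
    · exact h
    · have hb : b3 * (b3 - 1) = 0 := by linear_combination h
      rcases mul_eq_zero.mp hb with h' | h'
      · exact absurd h' hb3
      · exact absurd (by linear_combination h') hb1
  · intro h
    subst h
    refine ⟨by ring, by ring, by ring, by ring⟩

/-- The homomorphism `Q →* Multiplicative F` sending `a` to its first coordinate. -/
def phi : Q →* Multiplicative F where
  toFun a := Multiplicative.ofAdd a.a1
  map_one' := rfl
  map_mul' _ _ := rfl

theorem phi_apply (a : Q) : phi a = Multiplicative.ofAdd a.a1 := rfl

theorem cardF : Nat.card F = 8 := by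
  rw [GaloisField.card 2 3 (by norm_num)]
  norm_num

theorem index_of_ker {G : Type*} [Group G] (f : G →* Multiplicative F)
    (hf : Function.Surjective f) : f.ker.index = 8 := by
  rw [Subgroup.index_ker, MonoidHom.range_eq_top.mpr hf, Subgroup.card_top]
  exact cardF

/-- For `b = (0,0,b₃,b₄)` with `Tr b₃ = 0` and `b₃ ≠ 0`, the centralizer of `b` in `Q`
is exactly `Q² = {(0,a₂,a₃,a₄)}`; it has index `8` in `Q`, so the conjugacy class of
`b` in `Q` has size `8`. -/
theorem centralizer_of_Q3_element (b3 b4 : F) (htr : Tr b3 = 0) (hb3 : b3 ≠ 0) :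
    (Subgroup.centralizer {(⟨0, 0, b3, b4⟩ : Q)} : Set Q) = {a : Q | a.a1 = 0} ∧
      (Subgroup.centralizer {(⟨0, 0, b3, b4⟩ : Q)}).index = 8 ∧
      Set.ncard {c : Q | IsConj (⟨0, 0, b3, b4⟩ : Q) c} = 8 := by
  have hmem : ∀ a : Q, a ∈ Subgroup.centralizer {(⟨0, 0, b3, b4⟩ : Q)} ↔ a.a1 = 0 := by
    intro a
    rw [Subgroup.mem_centralizer_iff]
    simp only [Set.mem_singleton_iff, forall_eq]
    exact key b3 b4 htr hb3 a
  refine ⟨Set.ext fun a => hmem a, ?_, ?_⟩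
  · have hker : Subgroup.centralizer {(⟨0, 0, b3, b4⟩ : Q)} = phi.ker := by
      ext a
      rw [hmem a, MonoidHom.mem_ker, phi_apply, ofAdd_eq_one]
    rw [hker]
    exact index_of_ker phi fun x => ⟨⟨x.toAdd, 0, 0, 0⟩, rfl⟩
  · have hset : {c : Q | IsConj (⟨0, 0, b3, b4⟩ : Q) c}
        = MulAction.orbit (ConjAct Q) (⟨0, 0, b3, b4⟩ : Q) := by
      ext c
      rw [Set.mem_setOf_eq, ConjAct.mem_orbit_conjAct, isConj_comm]
    rw [hset, ← MulAction.index_stabilizer]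
    have hker : MulAction.stabilizer (ConjAct Q) (⟨0, 0, b3, b4⟩ : Q)
        = (phi.comp ConjAct.ofConjAct.toMonoidHom).ker := by
      ext g
      rw [MulAction.mem_stabilizer_iff, ConjAct.smul_def, mul_inv_eq_iff_eq_mul,
        MonoidHom.mem_ker, MonoidHom.comp_apply, MulEquiv.coe_toMonoidHom,
        phi_apply, ofAdd_eq_one]
      exact ⟨fun h => (key b3 b4 htr hb3 _).mp h.symm,
        fun h => ((key b3 b4 htr hb3 _).mpr h).symm⟩
    rw [hker]
    exact index_of_ker _ fun x => ⟨ConjAct.toConjAct ⟨x.toAdd, 0, 0, 0⟩, rfl⟩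

end Q
end
end

section
/- Let b = (0,b₂,b₃,b₄) ∈ Q with b₂ ≠ 0 and Tr(b₃) = 0. Then the centralizer of b in Q has exactly 256 elements, i.e. it has index 16 in Q; equivalently, there are exactly 4 pairs (a₁,a₂) ∈ F² satisfying a₁b₂² = b₂a₁⁴ and a₁b₃² + a₂b₂⁴ = b₃a₁ + b₂a₂⁴. -/
noncomputable section

namespace Q

theorem pr21 (x : F) : x ^ 21 = x ^ 7 := by
  rw [show (21:ℕ) = 14 + 7 from rfl, pow_add, pr14, show x^7*x^7 = x^14 from by ring, pr14]

theorem cube_inj {x y : F} (h : x ^ 3 = y ^ 3) : x = y := by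
  have h9 : x ^ 2 = y ^ 2 := by
    have h' : (x ^ 3) ^ 3 = (y ^ 3) ^ 3 := by rw [h]
    rw [show (x^3)^3 = x^9 from by ring, show (y^3)^3 = y^9 from by ring, pr9, pr9] at h'
    exact h'
  rcases eq_or_ne x 0 with hx | hx
  · subst hx
    have hy : y ^ 3 = 0 := by rw [← h]; ring
    exact ((pow_eq_zero_iff (by norm_num : (3:ℕ) ≠ 0)).mp hy).symm
  · have hx2 : x ^ 2 ≠ 0 := pow_ne_zero _ hx
    have : x ^ 2 * x = x ^ 2 * y := by
      rw [show x^2*x = x^3 from by ring, h, h9]; ring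
    exact mul_left_cancel₀ hx2 this

theorem ker2 {b2 d : F} (hb2 : b2 ≠ 0) (h : d * b2 ^ 4 = b2 * d ^ 4) :
    d = 0 ∨ d = b2 := by
  rcases eq_or_ne d 0 with hd | hd
  · exact Or.inl hd
  · right
    have h0 : b2 * d * (b2 ^ 3 - d ^ 3) = 0 := by linear_combination h
    rcases mul_eq_zero.mp h0 with h1 | h1
    · exact absurd (mul_eq_zero.mp h1) (by simp [hb2, hd])
    · exact cube_inj (sub_eq_zero.mp h1).symm

theorem mem_cent_iff (b2 b3 b4 : F) (a : Q) :
    a ∈ Subgroup.centralizer {(⟨0, b2, b3, b4⟩ : Q)} ↔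
      a.a1 * b2 ^ 2 = b2 * a.a1 ^ 4 ∧
        a.a1 * b3 ^ 2 + a.a2 * b2 ^ 4 = b3 * a.a1 + b2 * a.a2 ^ 4 := by
  rw [Subgroup.mem_centralizer_iff]
  simp only [Set.mem_singleton_iff, forall_eq]
  obtain ⟨a1, a2, a3, a4⟩ := a
  simp only [mul_def, mk.injEq]
  constructor
  · rintro ⟨-, -, h3, h4⟩
    exact ⟨by linear_combination -h3, by linear_combination -h4⟩
  · rintro ⟨h1, h2⟩
    exact ⟨by ring, by ring, by linear_combination -h1, by linear_combination -h2⟩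

/-- For `b = (0,b₂,b₃,b₄)` with `b₂ ≠ 0` and `Tr b₃ = 0`, the centralizer of `b` in
`Q` has exactly `256` elements, i.e. index `16` in `Q`; equivalently, exactly `4`
pairs `(a₁,a₂) ∈ F²` satisfy `a₁b₂² = b₂a₁⁴` and `a₁b₃² + a₂b₂⁴ = b₃a₁ + b₂a₂⁴`. -/
theorem centralizer_of_Q2_element (b2 b3 b4 : F) (hb2 : b2 ≠ 0) (htr : Tr b3 = 0) :
    Nat.card (Subgroup.centralizer {(⟨0, b2, b3, b4⟩ : Q)}) = 256 ∧
      (Subgroup.centralizer {(⟨0, b2, b3, b4⟩ : Q)}).index = 16 ∧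
      Set.ncard {p : F × F |
          p.1 * b2 ^ 2 = b2 * p.1 ^ 4 ∧
            p.1 * b3 ^ 2 + p.2 * b2 ^ 4 = b3 * p.1 + b2 * p.2 ^ 4} = 4 := by
  have hF : Nat.card F = 8 := GaloisField.card 2 3 (by norm_num)
  set c : F := b2 ^ 5 with hc
  have hcne : c ≠ 0 := pow_ne_zero _ hb2
  have hb38 : b3 ^ 8 = b3 := pr8 b3
  set S : Set (F × F) := {p : F × F |
      p.1 * b2 ^ 2 = b2 * p.1 ^ 4 ∧
        p.1 * b3 ^ 2 + p.2 * b2 ^ 4 = b3 * p.1 + b2 * p.2 ^ 4} with hSdef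
  have hS : S = {((0:F), (0:F)), (0, b2), (c, b2 * b3 ^ 2), (c, b2 * b3 ^ 2 + b2)} := by
    ext ⟨a1, a2⟩
    simp only [hSdef, Set.mem_setOf_eq, Set.mem_insert_iff, Set.mem_singleton_iff,
      Prod.mk.injEq]
    constructor
    · rintro ⟨h1, h2⟩
      rcases eq_or_ne a1 0 with ha1 | ha1
      · subst ha1
        have h2' : a2 * b2 ^ 4 = b2 * a2 ^ 4 := by linear_combination h2
        rcases ker2 hb2 h2' with h | h
        · exact Or.inl ⟨rfl, h⟩
        · exact Or.inr (Or.inl ⟨rfl, h⟩)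
      · have h0 : b2 * a1 * (b2 - a1 ^ 3) = 0 := by linear_combination h1
        have ha13 : a1 ^ 3 = b2 := by
          rcases mul_eq_zero.mp h0 with h | h
          · exact absurd (mul_eq_zero.mp h) (by simp [hb2, ha1])
          · exact (sub_eq_zero.mp h).symm
        have hac : a1 = c := by
          apply cube_inj
          rw [ha13, hc, show (b2^5)^3 = b2^15 from by ring, pr15]
        subst hac
        set d : F := a2 + b2 * b3 ^ 2 with hd
        have hd4 : d ^ 4 = a2 ^ 4 + b2 ^ 4 * b3 := by
          rw [hd, F.add_pow4, mul_pow, show (b3^2)^4 = b3^8 from by ring, hb38]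
        have hdk : d * b2 ^ 4 = b2 * d ^ 4 := by
          rw [hd4, hd]; linear_combination h2
        rcases ker2 hb2 hdk with h | h
        · refine Or.inr (Or.inr (Or.inl ⟨rfl, ?_⟩))
          rw [hd] at h
          linear_combination h - F.two (b2 * b3 ^ 2)
        · refine Or.inr (Or.inr (Or.inr ⟨rfl, ?_⟩))
          rw [hd] at h
          linear_combination h - F.two (b2 * b3 ^ 2)
    · have hkey : c * b3 ^ 2 + (b2 * b3 ^ 2) * b2 ^ 4 = b3 * c + b2 * (b2 * b3 ^ 2) ^ 4 := by
        rw [mul_pow, show (b3^2)^4 = b3^8 from by ring, hb38]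
        linear_combination F.two (b2 ^ 5 * b3 ^ 2) - F.two (b2 ^ 5 * b3)
      have heq1 : c * b2 ^ 2 = b2 * c ^ 4 := by
        rw [hc, show b2 * (b2^5)^4 = b2^21 from by ring, pr21]; ring
      rintro (⟨rfl, rfl⟩ | ⟨rfl, rfl⟩ | ⟨rfl, rfl⟩ | ⟨rfl, rfl⟩)
      · exact ⟨by ring, by ring⟩
      · exact ⟨by ring, by ring⟩
      · exact ⟨heq1, hkey⟩
      · refine ⟨heq1, ?_⟩
        have h4 : (b2 * b3 ^ 2 + b2) ^ 4 = (b2 * b3 ^ 2) ^ 4 + b2 ^ 4 := F.add_pow4 _ _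
        rw [h4]; linear_combination hkey
  have hS4 : S.ncard = 4 := by
    rw [hS]
    rw [Set.ncard_insert_of_notMem (by
      simp only [Set.mem_insert_iff, Set.mem_singleton_iff, Prod.mk.injEq, not_or]
      refine ⟨fun h => hb2 h.2.symm, fun h => hcne h.1.symm, fun h => hcne h.1.symm⟩) (Set.toFinite _)]
    rw [Set.ncard_insert_of_notMem (by
      simp only [Set.mem_insert_iff, Set.mem_singleton_iff, Prod.mk.injEq, not_or]
      exact ⟨fun h => hcne h.1.symm, fun h => hcne h.1.symm⟩) (Set.toFinite _)]
    rw [Set.ncard_insert_of_notMem (by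
      simp only [Set.mem_singleton_iff, Prod.mk.injEq, not_and]
      intro _ h
      exact hb2 (by linear_combination -h)) (Set.toFinite _)]
    rw [Set.ncard_singleton]
  have e1 : ↥(Subgroup.centralizer {(⟨0, b2, b3, b4⟩ : Q)}) ≃ ↥S × F × F :=
    { toFun := fun a => ⟨⟨(a.1.a1, a.1.a2), (mem_cent_iff b2 b3 b4 a.1).mp a.2⟩, a.1.a3, a.1.a4⟩
      invFun := fun x => ⟨⟨x.1.1.1, x.1.1.2, x.2.1, x.2.2⟩,
        (mem_cent_iff b2 b3 b4 _).mpr x.1.2⟩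
      left_inv := fun a => rfl
      right_inv := fun x => rfl }
  have eQ : Q ≃ F × F × F × F :=
    { toFun := fun a => (a.a1, a.a2, a.a3, a.a4)
      invFun := fun x => ⟨x.1, x.2.1, x.2.2.1, x.2.2.2⟩
      left_inv := fun a => rfl
      right_inv := fun x => rfl }
  have hcard : Nat.card (Subgroup.centralizer {(⟨0, b2, b3, b4⟩ : Q)}) = 256 := by
    rw [Nat.card_congr e1, Nat.card_prod, Nat.card_prod, Nat.card_coe_set_eq, hS4, hF]
  have hQcard : Nat.card Q = 4096 := by
    rw [Nat.card_congr eQ, Nat.card_prod, Nat.card_prod, Nat.card_prod, hF]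
  refine ⟨hcard, ?_, hS4⟩
  have := Subgroup.card_mul_index (Subgroup.centralizer {(⟨0, b2, b3, b4⟩ : Q)})
  rw [hcard, hQcard] at this
  omega


end Q
end
end

section
/- The element b = (0,1,0,0) of Q has inverse b⁻¹ = (0,1,0,1), and b is not conjugate to b⁻¹ in Q: there is no a ∈ Q with a⁻¹·b·a = b⁻¹. -/
noncomputable section

namespace Q

/-- The element `b = (0,1,0,0)` of `Q` (i.e. `1 + x²`) has inverse `b⁻¹ = (0,1,0,1)`,
and `b` is not conjugate to `b⁻¹` in `Q`. -/
theorem b_not_conjugate_to_inverse :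
    (⟨0, 1, 0, 0⟩ : Q)⁻¹ = ⟨0, 1, 0, 1⟩ ∧
      ¬∃ a : Q, a⁻¹ * ⟨0, 1, 0, 0⟩ * a = (⟨0, 1, 0, 1⟩ : Q) := by
  constructor
  · simp [inv_def]
  · rintro ⟨⟨a1,a2,a3,a4⟩, h⟩
    simp only [mul_def, inv_def, mk.injEq] at h
    obtain ⟨h1,h2,h3,h4⟩ := h
    ring_nf at h3 h4
    simp only [pr8, pr9, pr10, pr11, pr12, pr13, pr14, pr15, pr16, pr17, pr18, pr19, pr20] at h3 h4
    ring_nf at h4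
    have h2z : (2 : F) = 0 := CharTwo.two_eq_zero
    have e3 : a1 ^ 4 = a1 := by
      linear_combination h3 - (a1 + a3 + a1 * a2 ^ 2 + 2 * a1 ^ 4 * a2 + a1 ^ 7) * h2z
    have e4 : a2 + a2 ^ 4 + a1 ^ 2 + a1 ^ 3 = 1 := by
      linear_combination h4 - (2 * a3 * a1 + a3 * a1 ^ 2 * a2 ^ 2 + 3 * a3 * a1 ^ 5 * a2 +
        a3 ^ 2 * a1 + a1 + 8 * a1 ^ 2 * a2 ^ 2 + 3 * a1 ^ 3 * a2 ^ 4 + 5 * a1 ^ 5 * a2 +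
        6 * a1 ^ 6 * a2 ^ 3 + a2 ^ 5 + a4) * h2z
    have s1 : a1 ^ 2 = a1 := by
      rw [← pr16, show a1 ^ 16 = (a1 ^ 4) ^ 4 by ring, e3, e3]
    have s2 : a2 + a2 ^ 4 = 1 := by
      linear_combination e4 - (2 + a1) * s1 - a1 * h2z
    have s3 : a2 ^ 2 + a2 = 1 := by
      have h := congrArg (fun x => x ^ 2) s2
      simp only [F.add_sq, one_pow] at h
      rwa [show (a2 ^ 4) ^ 2 = a2 ^ 8 by ring, pr8] at h
    have s4 : a2 ^ 2 * (a2 + 1) ^ 2 = 0 := by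
      linear_combination s2 - s3 + (a2 ^ 3 + a2 ^ 2) * h2z
    rcases mul_eq_zero.mp s4 with h0 | h0
    · have : a2 = 0 := by
        have := pow_eq_zero_iff (n := 2) (by norm_num) |>.mp h0
        exact this
      rw [this] at s2
      simp at s2
    · have ha : a2 = 1 := by
        have h1' : a2 + 1 = 0 := pow_eq_zero_iff (n := 2) (by norm_num) |>.mp h0
        linear_combination h1' - h2z
      rw [ha] at s2
      norm_num at s2
      exact one_ne_zero (by linear_combination h2z - s2)

end Q
end
end
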